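/- (Theorem 1) Let ρ be a three-qubit state, F_A, F_B, F_C positive semidefinite 2×2 matrices with N = tr[(F_A⊗F_B⊗F_C) ρ (F_A⊗F_B⊗F_C)†] > 0, and ρ' = (F_A⊗F_B⊗F_C) ρ (F_A⊗F_B⊗F_C)†/N. Let M' be the 3×9 real matrix with entries M'_{j,(i,k)} = tr[ρ'(σ_i⊗σ_j⊗σ_k)], and let λ₁' be the maximal singular value of M', i.e. the square root of the largest eigenvalue of M'(M')ᵀ. Then for all unit vectors a, a', b, b', c, c' ∈ ℝ³, the Svetlichny operator S built from them satisfies |tr(S ρ')| ≤ 4 λ₁'. -/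

import Mathlib

open Matrix
open scoped Kronecker ComplexOrder

/-- The Pauli matrices σ₁, σ₂, σ₃ (indexed by `Fin 3`). -/
noncomputable def pauli : Fin 3 → Matrix (Fin 2) (Fin 2) ℂ :=
  ![!![0, 1; 1, 0], !![0, -Complex.I; Complex.I, 0], !![1, 0; 0, -1]]

/-- The observable `G = g₁σ₁ + g₂σ₂ + g₃σ₃` associated to a real vector `g ∈ ℝ³`. -/
noncomputable def obs (g : Fin 3 → ℝ) : Matrix (Fin 2) (Fin 2) ℂ :=
  ∑ i : Fin 3, ((g i : ℝ) : ℂ) • pauli i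

/-- The Svetlichny operator built from the unit vectors `a, a', b, b', c, c' ∈ ℝ³`. -/
noncomputable def svetlichny (a a' b b' c c' : Fin 3 → ℝ) :
    Matrix (Fin 2 × Fin 2 × Fin 2) (Fin 2 × Fin 2 × Fin 2) ℂ :=
  obs a ⊗ₖ ((obs b + obs b') ⊗ₖ obs c + (obs b - obs b') ⊗ₖ obs c')
    + obs a' ⊗ₖ ((obs b - obs b') ⊗ₖ obs c - (obs b + obs b') ⊗ₖ obs c')

/-! ### Auxiliary real linear-algebra lemmas -/

lemma star_eq_transpose_real {n m : Type*} (U : Matrix n m ℝ) : Uᴴ = Uᵀ := by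
  ext i j; simp [conjTranspose_apply]

lemma rayleigh {n : Type*} [Fintype n] [DecidableEq n] [Nonempty n] (A : Matrix n n ℝ)
    (hA : A.IsHermitian) (y : n → ℝ) :
    y ⬝ᵥ A.mulVec y ≤ (⨆ i, hA.eigenvalues i) * (y ⬝ᵥ y) := by
  set U : Matrix n n ℝ := (Matrix.IsHermitian.eigenvectorUnitary hA : Matrix n n ℝ) with hU
  have hstar : star U = Uᵀ := star_eq_transpose_real U
  have hUU : U * star U = 1 :=
    (Matrix.mem_unitaryGroup_iff).mp (IsHermitian.eigenvectorUnitary hA).2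
  set z : n → ℝ := Uᵀ.mulVec y with hz
  have hΛ : ∀ i, hA.eigenvalues i ≤ ⨆ i, hA.eigenvalues i := fun i =>
    le_ciSup (Set.Finite.bddAbove (Set.finite_range _)) i
  set d : n → ℝ := RCLike.ofReal ∘ hA.eigenvalues with hd
  have hdeq : d = hA.eigenvalues := by ext i; simp [hd, RCLike.ofReal]
  have h1 : y ⬝ᵥ A.mulVec y = z ⬝ᵥ (diagonal d).mulVec z := by
    conv_lhs => rw [hA.spectral_theorem, Unitary.conjStarAlgAut_apply, ← hU, hstar]
    rw [← mulVec_mulVec, ← mulVec_mulVec, dotProduct_mulVec y, ← mulVec_transpose, hz]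
  have h2 : z ⬝ᵥ z = y ⬝ᵥ y := by
    rw [hz, dotProduct_mulVec, vecMul_transpose, ← hstar, mulVec_mulVec, hUU, one_mulVec]
  rw [h1, ← h2]
  have h3 : z ⬝ᵥ (diagonal d).mulVec z = ∑ i, d i * z i ^ 2 := by
    simp only [dotProduct, mulVec_diagonal]
    exact Finset.sum_congr rfl fun i _ => by ring
  have h4 : z ⬝ᵥ z = ∑ i, z i ^ 2 := by simp [dotProduct, sq]
  rw [h3, h4, Finset.mul_sum]
  apply Finset.sum_le_sum
  intro i _
  rw [hdeq]
  have := sq_nonneg (z i)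
  nlinarith [hΛ i]

lemma dot_cs {ι : Type*} [Fintype ι] (u v : ι → ℝ) : (u ⬝ᵥ v)^2 ≤ (u ⬝ᵥ u) * (v ⬝ᵥ v) := by
  have := Finset.sum_mul_sq_le_sq_mul_sq Finset.univ u v
  simpa [dotProduct, sq] using this

lemma dot_self_nonneg {ι : Type*} [Fintype ι] (u : ι → ℝ) : 0 ≤ u ⬝ᵥ u :=
  Finset.sum_nonneg fun i _ => mul_self_nonneg _

lemma sv_bound {m p : Type*} [Fintype m] [Fintype p] [DecidableEq m] [DecidableEq p] [Nonempty m]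
    (M : Matrix m p ℝ) (hH : (M * Mᵀ).IsHermitian) (lam : ℝ)
    (hlam : lam = Real.sqrt (⨆ i, hH.eigenvalues i)) (w : p → ℝ) :
    (M.mulVec w) ⬝ᵥ (M.mulVec w) ≤ lam ^ 2 * (w ⬝ᵥ w) := by
  have hpsd : (M * Mᵀ).PosSemidef := by
    have := Matrix.posSemidef_self_mul_conjTranspose M
    rwa [star_eq_transpose_real] at this
  have hev : ∀ i, 0 ≤ hH.eigenvalues i := fun i => hpsd.eigenvalues_nonneg i
  have hlamsq : 0 ≤ ⨆ i, hH.eigenvalues i :=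
    le_trans (hev (Classical.arbitrary m)) (le_ciSup (Set.Finite.bddAbove (Set.finite_range _)) _)
  have hlam2 : lam ^ 2 = ⨆ i, hH.eigenvalues i := by
    rw [hlam, Real.sq_sqrt hlamsq]
  rw [hlam2]
  set Λ := ⨆ i, hH.eigenvalues i with hΛ
  have stepA : ∀ y : m → ℝ, (Mᵀ.mulVec y) ⬝ᵥ (Mᵀ.mulVec y) ≤ Λ * (y ⬝ᵥ y) := by
    intro y
    have : (Mᵀ.mulVec y) ⬝ᵥ (Mᵀ.mulVec y) = y ⬝ᵥ (M * Mᵀ).mulVec y := by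
      rw [dotProduct_mulVec, vecMul_transpose, mulVec_mulVec, dotProduct_comm]
    rw [this]
    exact rayleigh _ hH y
  set y : m → ℝ := M.mulVec w with hy
  have key : (y ⬝ᵥ y)^2 ≤ Λ * (y ⬝ᵥ y) * (w ⬝ᵥ w) := by
    have h1 : y ⬝ᵥ y = (Mᵀ.mulVec y) ⬝ᵥ w := by
      conv_lhs => rw [hy]
      rw [dotProduct_comm y, dotProduct_mulVec, ← mulVec_transpose]
    calc (y ⬝ᵥ y)^2 = ((Mᵀ.mulVec y) ⬝ᵥ w)^2 := by rw [h1]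
      _ ≤ ((Mᵀ.mulVec y) ⬝ᵥ (Mᵀ.mulVec y)) * (w ⬝ᵥ w) := dot_cs _ _
      _ ≤ Λ * (y ⬝ᵥ y) * (w ⬝ᵥ w) := by
          have := stepA y
          nlinarith [dot_self_nonneg w]
  rcases eq_or_lt_of_le (dot_self_nonneg y) with h0 | h0
  · rw [← h0]
    exact mul_nonneg hlamsq (dot_self_nonneg w)
  · nlinarith [key]

/-! ### Auxiliary complex matrix lemmas -/

lemma pauli_herm (i : Fin 3) : (pauli i)ᴴ = pauli i := by
  fin_cases i <;> ext a b <;> fin_cases a <;> fin_cases b <;>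
    simp [pauli, conjTranspose_apply]

lemma kron_conjT {l m p q : Type*} (A : Matrix l m ℂ) (B : Matrix p q ℂ) :
    (A ⊗ₖ B)ᴴ = Aᴴ ⊗ₖ Bᴴ := by
  ext ⟨i, j⟩ ⟨k, l⟩
  simp [conjTranspose_apply, kroneckerMap_apply]

lemma sum_kron {ι l m p q : Type*} [Fintype l] (s : Finset ι) (A : ι → Matrix l m ℂ)
    (B : Matrix p q ℂ) : (∑ i ∈ s, A i) ⊗ₖ B = ∑ i ∈ s, A i ⊗ₖ B := by
  ext ⟨i, j⟩ ⟨k, l⟩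
  simp [kroneckerMap_apply, Finset.sum_mul, Matrix.sum_apply]

lemma kron_sum {ι l m p q : Type*} [Fintype l] (s : Finset ι) (A : Matrix l m ℂ)
    (B : ι → Matrix p q ℂ) : A ⊗ₖ (∑ i ∈ s, B i) = ∑ i ∈ s, A ⊗ₖ B i := by
  ext ⟨i, j⟩ ⟨k, l⟩
  simp [kroneckerMap_apply, Finset.mul_sum, Matrix.sum_apply]

lemma kron_sub_right {l m p q : Type*} (A : Matrix l m ℂ) (B C : Matrix p q ℂ) :
    A ⊗ₖ (B - C) = A ⊗ₖ B - A ⊗ₖ C := by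
  ext ⟨i, j⟩ ⟨k, l⟩
  simp [kroneckerMap_apply, mul_sub, Matrix.sub_apply]

lemma obs_add (x y : Fin 3 → ℝ) : obs (fun i => x i + y i) = obs x + obs y := by
  simp [obs, add_smul, Finset.sum_add_distrib]

lemma obs_sub (x y : Fin 3 → ℝ) : obs (fun i => x i - y i) = obs x - obs y := by
  simp [obs, sub_smul, Finset.sum_sub_distrib]

lemma trace_real {n : Type*} [Fintype n] (X P : Matrix n n ℂ) (hX : Xᴴ = X) (hP : Pᴴ = P) :
    ((X * P).trace) = (((X * P).trace).re : ℂ) := by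
  have h : (starRingEnd ℂ) ((X * P).trace) = (X * P).trace := by
    have : ((X * P)ᴴ).trace = star ((X * P).trace) := Matrix.trace_conjTranspose _
    rw [conjTranspose_mul, hX, hP, trace_mul_comm] at this
    rw [← Complex.star_def]
    exact this.symm
  exact (Complex.conj_eq_iff_re.mp h).symm

lemma expand {ρ' : Matrix (Fin 2 × Fin 2 × Fin 2) (Fin 2 × Fin 2 × Fin 2) ℂ}
    (x y z : Fin 3 → ℝ) :
    ((obs x ⊗ₖ (obs y ⊗ₖ obs z)) * ρ').trace
      = ∑ i : Fin 3, ∑ j : Fin 3, ∑ k : Fin 3,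
          ((x i * y j * z k : ℝ) : ℂ) * ((ρ' * (pauli i ⊗ₖ (pauli j ⊗ₖ pauli k))).trace) := by
  simp only [obs, sum_kron, kron_sum, smul_kronecker, kronecker_smul, smul_smul,
    Finset.sum_mul, Matrix.sum_mul, trace_sum, Matrix.smul_mul, trace_smul]
  simp only [trace_mul_comm ρ', smul_eq_mul, Finset.smul_sum, Fin.sum_univ_three]
  push_cast
  ring

/-- Theorem 1: for the locally filtered state `ρ'`, the quantum value of any Svetlichny
operator is bounded by `4λ₁'`, where `λ₁'` is the maximal singular value of the
correlation matrix `M'` of `ρ'`. -/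
theorem svetlichny_filtered_upper_bound
    (ρ : Matrix (Fin 2 × Fin 2 × Fin 2) (Fin 2 × Fin 2 × Fin 2) ℂ)
    (hρ : ρ.PosSemidef) (hρtr : ρ.trace = 1)
    (FA FB FC : Matrix (Fin 2) (Fin 2) ℂ)
    (hFA : FA.PosSemidef) (hFB : FB.PosSemidef) (hFC : FC.PosSemidef)
    (N : ℝ) (hNpos : 0 < N)
    (hN : ((FA ⊗ₖ (FB ⊗ₖ FC)) * ρ * (FA ⊗ₖ (FB ⊗ₖ FC))ᴴ).trace = (N : ℂ))
    (ρ' : Matrix (Fin 2 × Fin 2 × Fin 2) (Fin 2 × Fin 2 × Fin 2) ℂ)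
    (hρ' : ρ' = ((N : ℂ))⁻¹ • ((FA ⊗ₖ (FB ⊗ₖ FC)) * ρ * (FA ⊗ₖ (FB ⊗ₖ FC))ᴴ))
    (M' : Matrix (Fin 3) (Fin 3 × Fin 3) ℝ)
    (hM' : ∀ (j : Fin 3) (i k : Fin 3),
      M' j (i, k) = ((ρ' * (pauli i ⊗ₖ (pauli j ⊗ₖ pauli k))).trace).re)
    (hH : (M' * M'ᵀ).IsHermitian)
    (lam : ℝ) (hlam : lam = Real.sqrt (⨆ i : Fin 3, hH.eigenvalues i)) :
    ∀ a a' b b' c c' : Fin 3 → ℝ,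
      (∑ i : Fin 3, a i ^ 2 = 1) → (∑ i : Fin 3, a' i ^ 2 = 1) →
      (∑ i : Fin 3, b i ^ 2 = 1) → (∑ i : Fin 3, b' i ^ 2 = 1) →
      (∑ i : Fin 3, c i ^ 2 = 1) → (∑ i : Fin 3, c' i ^ 2 = 1) →
      ‖(svetlichny a a' b b' c c' * ρ').trace‖ ≤ 4 * lam := by
  intro a a' b b' c c' ha ha' hb hb' hc hc'
  -- ρ' is Hermitian
  have hρ'H : ρ'ᴴ = ρ' := by
    rw [hρ']
    set F := FA ⊗ₖ (FB ⊗ₖ FC)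
    rw [conjTranspose_smul, conjTranspose_mul, conjTranspose_mul, conjTranspose_conjTranspose,
      hρ.1, mul_assoc]
    congr 1
    simp [Complex.star_def, map_inv₀, Complex.conj_ofReal]
  -- the pauli correlations are real
  have htr : ∀ i j k : Fin 3,
      (ρ' * (pauli i ⊗ₖ (pauli j ⊗ₖ pauli k))).trace = ((M' j (i, k) : ℝ) : ℂ) := by
    intro i j k
    rw [hM' j i k]
    exact trace_real ρ' _ hρ'H
      (by rw [kron_conjT, kron_conjT, pauli_herm, pauli_herm, pauli_herm])
  -- split the Svetlichny operator into four correlators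
  have hS : (svetlichny a a' b b' c c' * ρ').trace =
      ((obs a ⊗ₖ (obs (fun i => b i + b' i) ⊗ₖ obs c)) * ρ').trace
      + ((obs a ⊗ₖ (obs (fun i => b i - b' i) ⊗ₖ obs c')) * ρ').trace
      + ((obs a' ⊗ₖ (obs (fun i => b i - b' i) ⊗ₖ obs c)) * ρ').trace
      - ((obs a' ⊗ₖ (obs (fun i => b i + b' i) ⊗ₖ obs c')) * ρ').trace := by
    rw [svetlichny, ← obs_add b b', ← obs_sub b b']
    rw [kronecker_add, kron_sub_right, add_mul, add_mul, sub_mul, trace_add, trace_add, trace_sub]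
    ring
  -- the real correlation expression
  set R : ℝ := ∑ i : Fin 3, ∑ j : Fin 3, ∑ k : Fin 3,
      (a i * (b j + b' j) * c k + a i * (b j - b' j) * c' k
        + a' i * (b j - b' j) * c k - a' i * (b j + b' j) * c' k) * M' j (i, k) with hRdef
  have hRC : (svetlichny a a' b b' c c' * ρ').trace = (R : ℂ) := by
    rw [hS, expand, expand, expand, expand]
    simp only [htr, hRdef, Fin.sum_univ_three]
    push_cast
    ring
  rw [hRC, Complex.norm_real, Real.norm_eq_abs]
  -- now the real inequality
  have hlamnn : 0 ≤ lam := hlam ▸ Real.sqrt_nonneg _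
  set w1 : Fin 3 × Fin 3 → ℝ := fun p => a p.1 * c p.2 - a' p.1 * c' p.2 with hw1
  set w2 : Fin 3 × Fin 3 → ℝ := fun p => a p.1 * c' p.2 + a' p.1 * c p.2 with hw2
  set u : Fin 3 → ℝ := M'.mulVec w1 with hu
  set v : Fin 3 → ℝ := M'.mulVec w2 with hv
  set f : Fin 3 ⊕ Fin 3 → ℝ := Sum.elim (fun j => b j + b' j) (fun j => b j - b' j) with hf
  set g : Fin 3 ⊕ Fin 3 → ℝ := Sum.elim u v with hg
  have hRfg : R = ∑ t : Fin 3 ⊕ Fin 3, f t * g t := by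
    simp only [hRdef, hf, hg, hu, hv, hw1, hw2, Fintype.sum_sum_type, Sum.elim_inl, Sum.elim_inr,
      mulVec, dotProduct, Fintype.sum_prod_type, Fin.sum_univ_three]
    ring
  have hcs := Finset.sum_mul_sq_le_sq_mul_sq Finset.univ f g
  have hfsq : ∑ t : Fin 3 ⊕ Fin 3, f t ^ 2 = 4 := by
    simp only [hf, Fintype.sum_sum_type, Sum.elim_inl, Sum.elim_inr, Fin.sum_univ_three]
    simp only [Fin.sum_univ_three] at hb hb'
    nlinarith [hb, hb']
  have hw12 : w1 ⬝ᵥ w1 + w2 ⬝ᵥ w2 = 4 := by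
    have hexp : w1 ⬝ᵥ w1 + w2 ⬝ᵥ w2
        = (∑ i : Fin 3, a i ^ 2 + ∑ i : Fin 3, a' i ^ 2)
          * (∑ i : Fin 3, c i ^ 2 + ∑ i : Fin 3, c' i ^ 2) := by
      simp only [hw1, hw2, dotProduct, Fintype.sum_prod_type, Fin.sum_univ_three]
      ring
    rw [hexp, ha, ha', hc, hc']
    norm_num
  have hgsq : ∑ t : Fin 3 ⊕ Fin 3, g t ^ 2 ≤ 4 * lam ^ 2 := by
    have h1 : ∑ t : Fin 3 ⊕ Fin 3, g t ^ 2 = u ⬝ᵥ u + v ⬝ᵥ v := by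
      simp [hg, Fintype.sum_sum_type, dotProduct, sq]
    have h2 := sv_bound M' hH lam hlam w1
    have h3 := sv_bound M' hH lam hlam w2
    rw [h1]
    calc u ⬝ᵥ u + v ⬝ᵥ v ≤ lam ^ 2 * (w1 ⬝ᵥ w1) + lam ^ 2 * (w2 ⬝ᵥ w2) := by
          exact add_le_add h2 h3
      _ = lam ^ 2 * (w1 ⬝ᵥ w1 + w2 ⬝ᵥ w2) := by ring
      _ = 4 * lam ^ 2 := by rw [hw12]; ring
  have hR2 : R ^ 2 ≤ (4 * lam) ^ 2 := by
    calc R ^ 2 = (∑ t : Fin 3 ⊕ Fin 3, f t * g t) ^ 2 := by rw [hRfg]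
      _ ≤ (∑ t : Fin 3 ⊕ Fin 3, f t ^ 2) * ∑ t : Fin 3 ⊕ Fin 3, g t ^ 2 := hcs
      _ ≤ 4 * (4 * lam ^ 2) := by
          rw [hfsq]
          have h0 : (0:ℝ) ≤ 4 := by norm_num
          nlinarith [hgsq]
      _ = (4 * lam) ^ 2 := by ring
  have := Real.sqrt_le_sqrt hR2
  rwa [Real.sqrt_sq_eq_abs, Real.sqrt_sq (by positivity)] at this
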